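/- arXiv:1504.08248 — 4 statements merged into one kernel-verified Lean document; each statement's English description precedes it below -/
import Mathlib

section
/- For the plurality voting rule in weighted elections, bribery restricted to vulnerable votes is solved by the greedy strategy: p can be made the winner by changing only vulnerable votes if and only if p wins after every vulnerable vote is replaced by a vote ranking p first. Formally: if there exists any assignment of new rankings to the vulnerable votes making p win, then the assignment placing p first in every vulnerable vote also makes p win. -/
/-- Weighted plurality score over an arbitrary candidate type:
total weight of the votes ranking `x` first. -/
def plScore {C : Type} [DecidableEq C] (E : Multiset (ℕ × List C)) (x : C) : ℕ :=
  (E.map fun v => if v.2.head? = some x then v.1 else 0).sum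

/-- `x` wins w.r.t. a score function and a tie-breaking priority order
(lower priority value = preferred by the tie-breaking order). -/
def Wins {C : Type} (score : C → ℕ) (prio : C → ℕ) (x : C) : Prop :=
  ∀ y, y ≠ x → score y < score x ∨ (score y = score x ∧ prio x < prio y)

lemma plScore_add {C : Type} [DecidableEq C] (E E' : Multiset (ℕ × List C)) (x : C) :
    plScore (E + E') x = plScore E x + plScore E' x := by
  simp [plScore]

lemma plScore_le_weight {C : Type} [DecidableEq C] (E : Multiset (ℕ × List C)) (x : C) :
    plScore E x ≤ (E.map Prod.fst).sum := by
  unfold plScore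
  apply Multiset.sum_map_le_sum_map
  intro v _
  split <;> simp

/-- Greedy correctness of frugal bribery for weighted plurality: `F` is the multiset of
unchangeable (non-vulnerable) votes and `V` the multiset of vulnerable votes. If some
assignment of new rankings to the vulnerable votes (keeping their weights) makes `p`
the plurality winner, then every assignment placing `p` first in each vulnerable vote
also makes `p` the winner. -/
theorem stmt_13 {C : Type} [DecidableEq C] [Fintype C]
    (prio : C → ℕ) (p : C) (F V : Multiset (ℕ × List C))
    (h : ∃ V' : Multiset (ℕ × List C), V'.map Prod.fst = V.map Prod.fst ∧
      (∀ v ∈ V', v.2.Nodup ∧ ∀ x : C, x ∈ v.2) ∧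
      Wins (plScore (F + V')) prio p) :
    ∀ V'' : Multiset (ℕ × List C), V''.map Prod.fst = V.map Prod.fst →
      (∀ v ∈ V'', v.2.Nodup ∧ (∀ x : C, x ∈ v.2) ∧ v.2.head? = some p) →
      Wins (plScore (F + V'')) prio p := by
  obtain ⟨V', hw', _, hwin⟩ := h
  intro V'' hw'' hall y hy
  have hVp : plScore V'' p = (V''.map Prod.fst).sum := by
    unfold plScore
    congr 1
    apply Multiset.map_congr rfl
    intro v hv
    simp [(hall v hv).2.2]
  have hVy : plScore V'' y = 0 := by
    unfold plScore
    rw [Multiset.sum_eq_zero]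
    intro a ha
    obtain ⟨v, hv, rfl⟩ := Multiset.mem_map.mp ha
    simp only [(hall v hv).2.2, Option.some.injEq]
    exact if_neg (fun h => hy h.symm)
  have hp : plScore (F + V') p ≤ plScore (F + V'') p := by
    rw [plScore_add, plScore_add, hVp, hw'', ← hw']
    exact Nat.add_le_add_left (plScore_le_weight V' p) _
  have hy' : plScore (F + V'') y ≤ plScore (F + V') y := by
    rw [plScore_add, plScore_add, hVy]
    exact Nat.add_le_add_left (Nat.zero_le _) _
  rcases hwin y hy with h1 | ⟨h1, h2⟩
  · exact Or.inl (lt_of_le_of_lt hy' (lt_of_lt_of_le h1 hp))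
  · rcases lt_or_eq_of_le (le_trans hy' (h1 ▸ hp)) with h3 | h3
    · exact Or.inl h3
    · exact Or.inr ⟨h3, h2⟩
end

section
/- Score realization lemma: Let C = {c₁,…,c_m} ⊎ D with D nonempty, and let α be a normalized score vector of length |C ⊎ D| containing some consecutive gap α_k − α_{k+1} = 1. For any X = (X₁,…,X_m) ∈ ℤ^m, there exists λ ∈ ℝ and a profile of votes such that the α-score of cᵢ equals λ + Xᵢ for all i, and the score of every d ∈ D is strictly less than λ. Moreover the number of votes is polynomial in |C ⊎ D| · ∑ᵢ |Xᵢ|. -/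
/-- Auxiliary: mapping and summing distributes over a `Finset.sum` of multisets. -/
lemma score_sum_aux {β γ : Type*} (s : Finset γ) (g : γ → Multiset β) (f : β → ℝ) :
    (((∑ i ∈ s, g i)).map f).sum = ∑ i ∈ s, ((g i).map f).sum := by
  induction s using Finset.cons_induction with
  | empty => simp
  | cons a s ha ih => simp [Finset.sum_cons, ih]

/-- Auxiliary: mapping and summing over an `nsmul` of a multiset. -/
lemma score_nsmul_aux {β : Type*} (n : ℕ) (s : Multiset β) (f : β → ℝ) :
    ((n • s).map f).sum = (n : ℝ) * (s.map f).sum := by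
  induction n with
  | zero => simp
  | succ k ih => rw [succ_nsmul, Multiset.map_add, Multiset.sum_add, ih]; push_cast; ring

/-- Auxiliary: card of a `Finset.sum` of multisets. -/
lemma card_sum_aux {β γ : Type*} (s : Finset γ) (g : γ → Multiset β) :
    Multiset.card (∑ i ∈ s, g i) = ∑ i ∈ s, Multiset.card (g i) := by
  induction s using Finset.cons_induction with
  | empty => simp
  | cons a s ha ih => simp [Finset.sum_cons, ih]

/-- Score realization lemma (Lemma 4 / Baumeister et al. Lemma 4.2). Candidates are
`C = Fin m ⊕ Fin d` with `d ≥ 1` dummy candidates; a vote is a bijection from candidates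
to the `m + d` positions, and a candidate at position `i` receives `α i` points. If `α`
is a normalized score vector (non-increasing, with a consecutive unit gap
`α j - α (j+1) = 1` and zeros afterwards), then for every integer vector `X` there are a
real `λ` and a profile of votes realizing score `λ + Xᵢ` for each `cᵢ` and score strictly
below `λ` for every dummy, using a number of votes polynomial in `(m + d)` and `∑ᵢ |Xᵢ|`. -/
theorem stmt_16 (m d : ℕ) (hd : 0 < d) (α : Fin (m + d) → ℝ) (hα : Antitone α)
    (j : ℕ) (hj : j + 1 < m + d)
    (hgap : α ⟨j, by omega⟩ - α ⟨j + 1, hj⟩ = 1)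
    (hzero : ∀ i : Fin (m + d), j < (i : ℕ) → α i = 0)
    (X : Fin m → ℤ) :
    ∃ (P : Multiset ((Fin m ⊕ Fin d) ≃ Fin (m + d))) (lam : ℝ),
      (∀ i : Fin m, (P.map fun v => α (v (Sum.inl i))).sum = lam + (X i : ℝ)) ∧
      (∀ e : Fin d, (P.map fun v => α (v (Sum.inr e))).sum < lam) ∧
      Multiset.card P ≤ 4 * (m + d) ^ 2 * ((∑ i : Fin m, (X i).natAbs) + 1) := by
  classical
  haveI : NeZero (m + d) := ⟨by omega⟩
  set pj : Fin (m + d) := ⟨j, by omega⟩ with hpj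
  set pj1 : Fin (m + d) := ⟨j + 1, hj⟩ with hpj1
  set d0 : Fin d := ⟨0, hd⟩ with hd0
  set K : ℕ := ∑ i : Fin m, (X i).natAbs with hK
  have hXK : ∀ i, (X i).natAbs ≤ K := fun i =>
    Finset.single_le_sum (f := fun i => (X i).natAbs) (fun _ _ => Nat.zero_le _)
      (Finset.mem_univ i)
  set Y : Fin m → ℕ := fun i => (X i + K + 1).toNat with hYdef
  have hYcast : ∀ i, (Y i : ℤ) = X i + K + 1 := by
    intro i; have := hXK i; simp only [hYdef]; omega
  have hYle : ∀ i, Y i ≤ 2 * K + 2 := by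
    intro i; have := hXK i; simp only [hYdef]; omega
  set S : ℝ := ∑ p : Fin (m + d), α p with hS
  set E : (Fin m ⊕ Fin d) ≃ Fin (m + d) := finSumFinEquiv with hE
  have hABne : ∀ i : Fin m, E (Sum.inl i) ≠ E (Sum.inr d0) := fun i h =>
    Sum.inl_ne_inr (E.injective h)
  set e : Fin m → ((Fin m ⊕ Fin d) ≃ Fin (m + d)) := fun i =>
    E.trans ((Equiv.swap (E (Sum.inr d0)) pj).trans
      (Equiv.swap ((Equiv.swap (E (Sum.inr d0)) pj) (E (Sum.inl i))) pj1)) with he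
  have hpjne : pj ≠ pj1 := by simp [hpj, hpj1, Fin.ext_iff]
  have he2 : ∀ i, e i (Sum.inl i) = pj1 := by
    intro i; simp [he, Equiv.swap_apply_left]
  have he1 : ∀ i, e i (Sum.inr d0) = pj := by
    intro i
    simp only [he, Equiv.trans_apply]
    rw [Equiv.swap_apply_left]
    apply Equiv.swap_apply_of_ne_of_ne _ hpjne
    intro h
    have h2 : (Equiv.swap (E (Sum.inr d0)) pj) (E (Sum.inr d0)) = pj :=
      Equiv.swap_apply_left _ _
    exact hABne i ((Equiv.injective _ (h2.trans h)).symm)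
  set τ : Fin m → Equiv.Perm (Fin m ⊕ Fin d) := fun i =>
    Equiv.swap (Sum.inl i) (Sum.inr d0) with hτ
  set g : Fin m → Fin (m + d) → ((Fin m ⊕ Fin d) ≃ Fin (m + d)) := fun i r =>
    if r = 0 then (τ i).trans (e i) else (e i).trans (Equiv.addRight r) with hg
  set block : Fin m → Multiset ((Fin m ⊕ Fin d) ≃ Fin (m + d)) := fun i =>
    Multiset.map (g i) Finset.univ.val with hblockdef
  set P : Multiset ((Fin m ⊕ Fin d) ≃ Fin (m + d)) := ∑ i : Fin m, Y i • block i with hP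
  have hsum : ∀ c : Fin m ⊕ Fin d,
      (P.map fun v => α (v c)).sum
        = ∑ i : Fin m, (Y i : ℝ) * (((block i).map fun v => α (v c)).sum) := by
    intro c
    rw [hP, score_sum_aux]
    exact Finset.sum_congr rfl fun i _ => score_nsmul_aux _ _ _
  have hblockscore : ∀ i c,
      ((block i).map fun v => α (v c)).sum = S + α (e i ((τ i) c)) - α (e i c) := by
    intro i c
    rw [hblockdef]
    simp only [Multiset.map_map, Function.comp]
    have h1 : (Multiset.map (fun r => α ((g i r) c)) Finset.univ.val).sum
        = ∑ r : Fin (m + d), α ((g i r) c) := rfl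
    rw [h1, ← Finset.add_sum_erase _ _ (Finset.mem_univ (0 : Fin (m + d)))]
    have hrest : ∀ r ∈ Finset.univ.erase (0 : Fin (m + d)),
        α ((g i r) c) = α ((e i c) + r) := by
      intro r hr
      rw [hg]
      simp only [if_neg (Finset.ne_of_mem_erase hr)]
      rfl
    rw [Finset.sum_congr rfl hrest]
    have h2 : ∑ r ∈ Finset.univ.erase (0 : Fin (m + d)), α (e i c + r)
        = (∑ r : Fin (m + d), α (e i c + r)) - α (e i c + 0) := by
      rw [← Finset.add_sum_erase _ (fun r => α (e i c + r))
        (Finset.mem_univ (0 : Fin (m + d)))]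
      ring
    rw [h2, add_zero]
    have h3 : ∑ r : Fin (m + d), α (e i c + r) = S :=
      Fintype.sum_equiv (Equiv.addLeft (e i c)) _ _ (fun r => rfl)
    rw [h3]
    have h4 : g i 0 c = e i ((τ i) c) := by rw [hg]; simp
    rw [h4]
    ring
  have hgap' : α pj - α pj1 = 1 := hgap
  have hscorel : ∀ i' : Fin m, (P.map fun v => α (v (Sum.inl i'))).sum
      = (∑ i : Fin m, (Y i : ℝ)) * S + Y i' := by
    intro i'
    rw [hsum]
    have key : ∀ i : Fin m, (Y i : ℝ) * (((block i).map fun v => α (v (Sum.inl i'))).sum)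
        = (Y i : ℝ) * S + (if i = i' then (Y i : ℝ) else 0) := by
      intro i
      rw [hblockscore]
      by_cases h : i = i'
      · subst h
        rw [hτ]
        simp only [Equiv.swap_apply_left]
        rw [he1, he2]
        simp only [eq_self_iff_true, if_true]
        nlinarith [hgap']
      · have hfix : (τ i) (Sum.inl i') = Sum.inl i' := by
          rw [hτ]
          apply Equiv.swap_apply_of_ne_of_ne
          · simp [Ne.symm h]
          · simp
        rw [hfix, if_neg h]
        ring
    rw [Finset.sum_congr rfl (fun i _ => key i), Finset.sum_add_distrib, ← Finset.sum_mul,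
      Finset.sum_ite_eq' Finset.univ i' (fun i => (Y i : ℝ))]
    simp
  have hscorer : ∀ ε : Fin d, (P.map fun v => α (v (Sum.inr ε))).sum
      ≤ (∑ i : Fin m, (Y i : ℝ)) * S := by
    intro ε
    rw [hsum]
    have key : ∀ i : Fin m, (Y i : ℝ) * (((block i).map fun v => α (v (Sum.inr ε))).sum)
        ≤ (Y i : ℝ) * S := by
      intro i
      rw [hblockscore]
      by_cases h : ε = d0
      · subst h
        rw [hτ]
        simp only [Equiv.swap_apply_right]
        rw [he1, he2]
        have hYnn : (0 : ℝ) ≤ (Y i : ℝ) := Nat.cast_nonneg _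
        nlinarith [hgap']
      · have hfix : (τ i) (Sum.inr ε) = Sum.inr ε := by
          rw [hτ]
          apply Equiv.swap_apply_of_ne_of_ne
          · simp
          · simp [h]
        rw [hfix]
        exact le_of_eq (by ring)
    calc ∑ i : Fin m, (Y i : ℝ) * (((block i).map fun v => α (v (Sum.inr ε))).sum)
        ≤ ∑ i : Fin m, (Y i : ℝ) * S := Finset.sum_le_sum fun i _ => key i
      _ = (∑ i : Fin m, (Y i : ℝ)) * S := by rw [Finset.sum_mul]
  refine ⟨P, (∑ i : Fin m, (Y i : ℝ)) * S + (K + 1 : ℝ), ?_, ?_, ?_⟩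
  · intro i
    rw [hscorel i]
    have hc : (Y i : ℝ) = (X i : ℝ) + K + 1 := by exact_mod_cast hYcast i
    rw [hc]; ring
  · intro ε
    have h1 := hscorer ε
    have h2 : (0 : ℝ) < (K : ℝ) + 1 := by positivity
    linarith
  · have hcard : Multiset.card P = (∑ i : Fin m, Y i) * (m + d) := by
      rw [hP, card_sum_aux, Finset.sum_mul]
      refine Finset.sum_congr rfl fun i _ => ?_
      rw [Multiset.card_nsmul, hblockdef]
      simp
    rw [hcard]
    have h1 : (∑ i : Fin m, Y i) ≤ m * (2 * K + 2) := by
      calc (∑ i : Fin m, Y i) ≤ ∑ _i : Fin m, (2 * K + 2) :=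
            Finset.sum_le_sum fun i _ => hYle i
        _ = m * (2 * K + 2) := by simp [Finset.sum_const, mul_comm]
    have h2 : m ≤ m + d := Nat.le_add_right m d
    calc (∑ i : Fin m, Y i) * (m + d) ≤ (m * (2 * K + 2)) * (m + d) :=
          Nat.mul_le_mul_right _ h1
      _ ≤ ((m + d) * (2 * K + 2)) * (m + d) := by
          exact Nat.mul_le_mul_right _ (Nat.mul_le_mul_right _ h2)
      _ = 2 * (m + d) ^ 2 * (K + 1) := by ring
      _ ≤ 4 * (m + d) ^ 2 * (K + 1) :=
          Nat.mul_le_mul_right _ (Nat.mul_le_mul_right _ (by omega))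
end

section
/- In the Borda Frugal-Bribery reduction, the forward direction holds: if I ⊆ [t] with |I| = m/3 indexes an exact 3-set cover of U (i.e., the sets Sᵢ, i ∈ I, partition U), then replacing each vote vᵢ¹ (i ∈ I) of the form p ≻ D ≻ (U∖Sᵢ) ≻ c ≻ z ≻ Sᵢ with p ≻ D ≻ (U∖Sᵢ) ≻ z ≻ Sᵢ ≻ c decreases c's total Borda score by 4m/3, increases z's total score by m/3, and increases each u ∈ U's score by exactly 1, leaving p's and D's scores unchanged. -/
private lemma idx_mid {C : Type} [DecidableEq C] {x : C} (l₁ l₂ : List C) (h : x ∉ l₁) :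
    List.idxOf x (l₁ ++ x :: l₂) = l₁.length := by
  rw [List.idxOf_append_of_notMem h, List.idxOf_cons_self]
  simp

private lemma idx_in {C : Type} [DecidableEq C] {x : C} (l₁ S l₂ : List C)
    (h : x ∉ l₁) (hx : x ∈ S) :
    List.idxOf x (l₁ ++ S ++ l₂) = l₁.length + List.idxOf x S := by
  rw [List.idxOf_append_of_mem (by simp [hx]), List.idxOf_append_of_notMem h]

/-- Forward direction of the Borda `Frugal-Bribery` reduction. The candidate set is
`{p} ∪ D ∪ U ∪ {c, z}` with `|D| = 5m`, `|U| = m` (listed in fixed orders `Dl`, `Ul`),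
so there are `N = 6m + 3` candidates and the Borda score of the candidate at (0-indexed)
position `i` of a vote is `N - 1 - i`. For every `i` in the index set `I` (of size `m/3`,
indexing an exact 3-set cover `{Sl i}` of `U`), the original vote
`p ≻ D ≻ (U ∖ Sᵢ) ≻ c ≻ z ≻ Sᵢ` is replaced by `p ≻ D ≻ (U ∖ Sᵢ) ≻ z ≻ Sᵢ ≻ c`.
Then, over this block of votes, `c`'s total Borda score decreases by `4m/3`, `z`'s
increases by `m/3`, each `u ∈ U` gains exactly `1`, and the scores of `p` and of every
member of `D` are unchanged. -/
theorem stmt_17 {C : Type} [DecidableEq C] {ι : Type} [DecidableEq ι]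
    (m : ℕ) (hm : 0 < m) (hm3 : 3 ∣ m)
    (p c z : C) (Dl Ul : List C) (I : Finset ι) (Sl : ι → List C)
    (hDlen : Dl.length = 5 * m) (hUlen : Ul.length = m)
    (hframe : (p :: (Dl ++ Ul ++ [c, z])).Nodup)
    (hI : I.card = m / 3)
    (hSl : ∀ i ∈ I, (Sl i).Nodup ∧ (Sl i).length = 3 ∧ ∀ u ∈ Sl i, u ∈ Ul)
    (hpart : (∑ i ∈ I, ((Sl i : Multiset C))) = (Ul : Multiset C)) :
    let N : ℤ := 6 * m + 3
    let oldV : ι → List C := fun i =>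
      p :: (Dl ++ (Ul.filter fun u => decide (u ∉ Sl i)) ++ [c] ++ [z] ++ Sl i)
    let newV : ι → List C := fun i =>
      p :: (Dl ++ (Ul.filter fun u => decide (u ∉ Sl i)) ++ [z] ++ Sl i ++ [c])
    let oldS : C → ℤ := fun x => ∑ i ∈ I, (N - 1 - ((oldV i).idxOf x : ℤ))
    let newS : C → ℤ := fun x => ∑ i ∈ I, (N - 1 - ((newV i).idxOf x : ℤ))
    newS c = oldS c - 4 * ((m / 3 : ℕ) : ℤ) ∧
    newS z = oldS z + ((m / 3 : ℕ) : ℤ) ∧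
    (∀ u ∈ Ul, newS u = oldS u + 1) ∧
    newS p = oldS p ∧
    (∀ dd ∈ Dl, newS dd = oldS dd) := by
  intro N oldV newV oldS newS
  simp only [List.nodup_cons, List.nodup_append, List.mem_append, List.mem_cons,
    List.mem_singleton, not_or, List.nodup_nil, List.disjoint_left] at hframe
  obtain ⟨⟨⟨hpD, hpU⟩, hpc, hpz, -⟩, ⟨hDnd, hUnd, hDU⟩, ⟨⟨hcz, -⟩, -, -⟩, hDUcz⟩ := hframe
  have hcD : c ∉ Dl := fun h => hDUcz c (Or.inl h) c (Or.inl rfl) rfl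
  have hzD : z ∉ Dl := fun h => hDUcz z (Or.inl h) z (Or.inr (Or.inl rfl)) rfl
  have hcU : c ∉ Ul := fun h => hDUcz c (Or.inr h) c (Or.inl rfl) rfl
  have hzU : z ∉ Ul := fun h => hDUcz z (Or.inr h) z (Or.inr (Or.inl rfl)) rfl
  -- per-vote facts
  have key : ∀ i ∈ I,
      ((newV i).idxOf c : ℤ) = ((oldV i).idxOf c : ℤ) + 4 ∧
      ((newV i).idxOf z : ℤ) = ((oldV i).idxOf z : ℤ) - 1 ∧
      (newV i).idxOf p = (oldV i).idxOf p ∧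
      (∀ u ∈ Ul, ((newV i).idxOf u : ℤ) =
        ((oldV i).idxOf u : ℤ) - (List.count u (Sl i) : ℤ)) ∧
      (∀ dd ∈ Dl, (newV i).idxOf dd = (oldV i).idxOf dd) := by
    intro i hi
    obtain ⟨hSnd, hS3, hSU⟩ := hSl i hi
    set F : List C := Ul.filter (fun u => decide (u ∉ Sl i)) with hF
    set S : List C := Sl i with hSdef
    have hFsub : ∀ x ∈ F, x ∈ Ul := fun x hx => (List.mem_filter.mp hx).1
    have hcF : c ∉ F := fun h => hcU (hFsub _ h)
    have hzF : z ∉ F := fun h => hzU (hFsub _ h)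
    have hpF : p ∉ F := fun h => hpU (hFsub _ h)
    have hcS : c ∉ S := fun h => hcU (hSU _ h)
    have hzS : z ∉ S := fun h => hzU (hSU _ h)
    have hpS : p ∉ S := fun h => hpU (hSU _ h)
    have hoe : oldV i = (p :: (Dl ++ F)) ++ [c] ++ [z] ++ S := by
      simp [oldV, hF, hSdef]
    have hne : newV i = (p :: (Dl ++ F)) ++ [z] ++ S ++ [c] := by
      simp [newV, hF, hSdef]
    have hpDF : c ∉ p :: (Dl ++ F) := by simp [hcD, hcF, Ne.symm hpc]
    have hzDF : z ∉ p :: (Dl ++ F) := by simp [hzD, hzF, Ne.symm hpz]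
    refine ⟨?_, ?_, ?_, ?_, ?_⟩
    · -- c
      have ho : List.idxOf c (oldV i) = Dl.length + F.length + 1 := by
        rw [hoe, show (p :: (Dl ++ F)) ++ [c] ++ [z] ++ S
            = (p :: (Dl ++ F)) ++ c :: ([z] ++ S) by simp,
          idx_mid _ _ hpDF]
        simp [Nat.add_comm]
      have hn : List.idxOf c (newV i) = Dl.length + F.length + 5 := by
        rw [hne, show (p :: (Dl ++ F)) ++ [z] ++ S ++ [c]
            = ((p :: (Dl ++ F)) ++ [z] ++ S) ++ c :: [] by simp,
          idx_mid _ _ (by simp [hcD, hcF, hcS, hcz, Ne.symm hpc])]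
        simp [hS3]; ring
      rw [ho, hn]; push_cast; ring
    · -- z
      have ho : List.idxOf z (oldV i) = Dl.length + F.length + 2 := by
        rw [hoe, show (p :: (Dl ++ F)) ++ [c] ++ [z] ++ S
            = ((p :: (Dl ++ F)) ++ [c]) ++ z :: S by simp,
          idx_mid _ _ (by simp [hzD, hzF, Ne.symm hcz, Ne.symm hpz])]
        simp; ring
      have hn : List.idxOf z (newV i) = Dl.length + F.length + 1 := by
        rw [hne, show (p :: (Dl ++ F)) ++ [z] ++ S ++ [c]
            = (p :: (Dl ++ F)) ++ z :: (S ++ [c]) by simp,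
          idx_mid _ _ hzDF]
        simp [Nat.add_comm]
      rw [ho, hn]; push_cast; ring
    · -- p
      rw [hoe, hne]
      simp [List.idxOf_cons_self]
    · -- u ∈ Ul
      intro u hu
      have hupc : p ≠ u := fun h => hpU (h ▸ hu)
      have huc : u ≠ c := fun h => hcU (h ▸ hu)
      have huz : u ≠ z := fun h => hzU (h ▸ hu)
      have huD : u ∉ Dl := fun h => hDU u h u hu rfl
      by_cases huS : u ∈ S
      · have hcount : List.count u (Sl i) = 1 :=
          List.count_eq_one_of_mem hSnd huS
        have huF : u ∉ F := by simp [hF, List.mem_filter, huS, hSdef]; exact fun _ => huS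
        have huDF : u ∉ p :: (Dl ++ F) := by simp [huD, huF, Ne.symm hupc]
        have ho : List.idxOf u (oldV i)
            = (Dl.length + F.length + 3) + List.idxOf u S := by
          rw [hoe, List.idxOf_append_of_notMem
            (by simp [huD, huF, huc, huz, Ne.symm hupc])]
          simp; ring
        have hn : List.idxOf u (newV i)
            = (Dl.length + F.length + 2) + List.idxOf u S := by
          rw [hne, idx_in _ S _ (by simp [huD, huF, huz, Ne.symm hupc]) huS]
          simp; ring
        rw [ho, hn, hcount]; push_cast; ring
      · have hcount : List.count u (Sl i) = 0 :=
          List.count_eq_zero.mpr huS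
        have huF : u ∈ F := by
          simp [hF, List.mem_filter, huS, hu, hSdef]; exact huS
        have ho : List.idxOf u (oldV i) = 1 + (Dl.length + List.idxOf u F) := by
          rw [hoe, show (p :: (Dl ++ F)) ++ [c] ++ [z] ++ S
              = p :: (Dl ++ F ++ ([c] ++ [z] ++ S)) by simp,
            List.idxOf_cons_ne _ hupc,
            show Dl ++ F ++ ([c] ++ [z] ++ S) = Dl ++ (F ++ ([c] ++ [z] ++ S)) by simp,
            List.idxOf_append_of_notMem huD,
            List.idxOf_append_of_mem huF]
          simp [Nat.succ_eq_add_one]; ring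
        have hn : List.idxOf u (newV i) = 1 + (Dl.length + List.idxOf u F) := by
          rw [hne, show (p :: (Dl ++ F)) ++ [z] ++ S ++ [c]
              = p :: (Dl ++ (F ++ ([z] ++ S ++ [c]))) by simp,
            List.idxOf_cons_ne _ hupc,
            List.idxOf_append_of_notMem huD,
            List.idxOf_append_of_mem huF]
          simp [Nat.succ_eq_add_one]; ring
        rw [ho, hn, hcount]; push_cast; ring
    · -- dd ∈ Dl
      intro dd hdd
      have hpd : p ≠ dd := fun h => hpD (h ▸ hdd)
      rw [hoe, hne,
        show (p :: (Dl ++ F)) ++ [c] ++ [z] ++ S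
          = p :: (Dl ++ (F ++ ([c] ++ [z] ++ S))) by simp,
        show (p :: (Dl ++ F)) ++ [z] ++ S ++ [c]
          = p :: (Dl ++ (F ++ ([z] ++ S ++ [c]))) by simp,
        List.idxOf_cons_ne _ hpd, List.idxOf_cons_ne _ hpd,
        List.idxOf_append_of_mem hdd, List.idxOf_append_of_mem hdd]
  refine ⟨?_, ?_, ?_, ?_, ?_⟩
  · have : newS c = ∑ i ∈ I, ((N - 1 - ((oldV i).idxOf c : ℤ)) - 4) :=
      Finset.sum_congr rfl fun i hi => by rw [(key i hi).1]; ring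
    rw [this, Finset.sum_sub_distrib, Finset.sum_const, hI]
    simp [oldS]; ring
  · have : newS z = ∑ i ∈ I, ((N - 1 - ((oldV i).idxOf z : ℤ)) + 1) :=
      Finset.sum_congr rfl fun i hi => by rw [(key i hi).2.1]; ring
    rw [this, Finset.sum_add_distrib, Finset.sum_const, hI]
    simp [oldS]
  · intro u hu
    have : newS u = ∑ i ∈ I,
        ((N - 1 - ((oldV i).idxOf u : ℤ)) + (List.count u (Sl i) : ℤ)) :=
      Finset.sum_congr rfl fun i hi => by rw [(key i hi).2.2.2.1 u hu]; ring
    rw [this, Finset.sum_add_distrib]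
    have hcnt : (∑ i ∈ I, (List.count u (Sl i) : ℤ)) = 1 := by
      have h1 : (∑ i ∈ I, List.count u (Sl i)) = 1 := by
        have := Multiset.count_sum' (s := I) (a := u) (f := fun i => (Sl i : Multiset C))
        rw [hpart] at this
        simp only [Multiset.coe_count] at this
        rw [← this, List.count_eq_one_of_mem hUnd hu]
      rw [← Nat.cast_sum, h1, Nat.cast_one]
    rw [hcnt]
  · exact Finset.sum_congr rfl fun i hi => by rw [(key i hi).2.2.1]
  · intro dd hdd
    exact Finset.sum_congr rfl fun i hi => by rw [(key i hi).2.2.2.2 dd hdd]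
end

section
/- In the k-approval Frugal-$Bribery reduction (k ≥ 5), the score-counting step holds: in any collection of votes of the form p ≻ q ≻ Sᵢ ≻ D ≻ others (with |Sᵢ| = 3, |D| = k−1, so both p and q are approved and each element of Sᵢ is approved), if exactly m/3 of these votes are changed so that q is no longer among the top k in each changed vote — and additionally the sets Sᵢ corresponding to the changed votes do not cover U — then there is a candidate x ∈ U whose k-approval score from these votes is unchanged. -/
/-- Score-counting step of the `k`-approval `Frugal-$Bribery` reduction (`k ≥ 5`).
A `k`-approval vote is identified with its approved set of `k` candidates. Originally
vote `i` approves `A i = {p, q} ∪ S i ∪ T i` with `S i ⊆ U` of size `3` and `T i ⊆ D`.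
Exactly the votes indexed by `J` (with `|J| = |U| / 3`) are changed, to arbitrary
approved sets `B i` of size `k` that no longer contain `q`. If the sets `S i` for
`i ∈ J` do not cover `U`, then there is a candidate `x ∈ U` whose `k`-approval score
from this block of votes does not decrease (it is unchanged on unchanged votes and `x`
is approved by no original changed vote). -/
theorem stmt_18 {C : Type} [DecidableEq C] {ι : Type} [Fintype ι] [DecidableEq ι]
    (k : ℕ) (hk : 5 ≤ k) (p q : C) (U D : Finset C)
    (hpU : p ∉ U) (hqU : q ∉ U) (hUD : Disjoint U D) (hpq : p ≠ q)
    (S T : ι → Finset C) (hS : ∀ i, S i ⊆ U ∧ (S i).card = 3) (hT : ∀ i, T i ⊆ D)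
    (A : ι → Finset C) (hA : ∀ i, A i = insert p (insert q (S i ∪ T i)) ∧ (A i).card = k)
    (J : Finset ι) (hJ : J.card = U.card / 3)
    (B : ι → Finset C) (hB : ∀ i ∈ J, (B i).card = k ∧ q ∉ B i)
    (hBeq : ∀ i ∉ J, B i = A i)
    (hcov : ¬ U ⊆ J.biUnion S) :
    ∃ x ∈ U, (∑ i : ι, if x ∈ A i then 1 else 0) ≤ ∑ i : ι, if x ∈ B i then 1 else 0 := by
  rw [Finset.not_subset] at hcov
  obtain ⟨x, hxU, hx⟩ := hcov
  simp only [Finset.mem_biUnion, not_exists, not_and] at hx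
  refine ⟨x, hxU, Finset.sum_le_sum fun i _ => ?_⟩
  by_cases hiJ : i ∈ J
  · have : x ∉ A i := by
      rw [(hA i).1]
      simp only [Finset.mem_insert, Finset.mem_union]
      push_neg
      refine ⟨fun h => hpU (h ▸ hxU), fun h => hqU (h ▸ hxU), hx i hiJ,
        fun h => (Finset.disjoint_left.mp hUD) hxU (hT i h)⟩
    simp [this]
  · rw [hBeq i hiJ]
end
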